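/- Let μ and ν be distinct strict partitions of n, let r be the largest index with μ_r ≠ ν_r (such r exists and r > 1 since |μ| = |ν|), assume μ_r < ν_r, and set m = r + ν_r. Fix pairs of partitions (α,β) and (α′,β′) such that α₁ = α′₁ = k and |α| + |β| = |α′| + |β′| = ν_r + (r − 1). If the extension of ν by (α,β) equals the extension of ν by (α′,β′), then the extension of μ by (α,β) equals the extension of μ by (α′,β′). -/
import Mathlib


/-- `μ : ℕ → ℕ` represents a partition via its parts `μ 1 ≥ μ 2 ≥ ⋯`; the index `0` is
unused and required to be `0`.  The parts are weakly decreasing and only finitely many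
are nonzero. -/
def IsPartition (μ : ℕ → ℕ) : Prop :=
  μ 0 = 0 ∧ (∀ i, 1 ≤ i → μ (i + 1) ≤ μ i) ∧ {i | μ i ≠ 0}.Finite

/-- The weight `|μ|` of a partition: the sum of its parts. -/
noncomputable def pweight (μ : ℕ → ℕ) : ℕ := ∑ᶠ i, μ i

/-- The length `ℓ(μ)`: the number of nonzero parts. -/
noncomputable def plength (μ : ℕ → ℕ) : ℕ := Set.ncard {i | 1 ≤ i ∧ μ i ≠ 0}

/-- A partition is strict if its nonzero parts are pairwise distinct. -/
def IsStrict (μ : ℕ → ℕ) : Prop := ∀ i j, 1 ≤ i → i < j → μ j ≠ 0 → μ j < μ i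

/-- `(i, j)` is a cell of the Ferrers board of `μ`. -/
def Cell (μ : ℕ → ℕ) (i j : ℕ) : Prop := 1 ≤ i ∧ 1 ≤ j ∧ j ≤ μ i

/-- The Ferrers board of `μ` as a set of cells. -/
def Board (μ : ℕ → ℕ) : Set (ℕ × ℕ) := {p | Cell μ p.1 p.2}

/-- The number of ways to place `k` non-attacking rooks on the Ferrers board of `μ`,
i.e. the number of `k`-element subsets of the board whose cells have pairwise distinct
row indices and pairwise distinct column indices. -/
noncomputable def rookCount (μ : ℕ → ℕ) (k : ℕ) : ℕ :=
  Set.ncard {s : Finset (ℕ × ℕ) | s.card = k ∧ (∀ p ∈ s, Cell μ p.1 p.2) ∧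
    ∀ p ∈ s, ∀ q ∈ s, p ≠ q → p.1 ≠ q.1 ∧ p.2 ≠ q.2}

/-- Rook equivalence of partitions. -/
def RookEquiv (μ ν : ℕ → ℕ) : Prop := ∀ k, rookCount μ k = rookCount ν k

/-- `α` contains `μ` as a pattern: there are strictly increasing functions `f, g` on the
positive integers such that `(i, j)` is a cell of `μ` iff `(f i, g j)` is a cell of `α`. -/
def Contains (α μ : ℕ → ℕ) : Prop :=
  ∃ f g : ℕ → ℕ,
    (∀ i, 1 ≤ i → 1 ≤ f i) ∧ (∀ j, 1 ≤ j → 1 ≤ g j) ∧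
    (∀ i j, 1 ≤ i → i < j → f i < f j) ∧
    (∀ i j, 1 ≤ i → i < j → g i < g j) ∧
    (∀ i j, 1 ≤ i → 1 ≤ j → (Cell μ i j ↔ Cell α (f i) (g j)))

/-- `P_n(μ)`: the set of partitions of `n` containing `μ`. -/
def PnSet (n : ℕ) (μ : ℕ → ℕ) : Set (ℕ → ℕ) :=
  {α | IsPartition α ∧ pweight α = n ∧ Contains α μ}

/-- `P_n(μ, k)`: the members of `P_n(μ)` whose first part is `k + μ 1`. -/
def PnSetK (n : ℕ) (μ : ℕ → ℕ) (k : ℕ) : Set (ℕ → ℕ) :=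
  {α | α ∈ PnSet n μ ∧ α 1 = k + μ 1}

/-- Wilf equivalence of partitions. -/
def WilfEquiv (μ ν : ℕ → ℕ) : Prop :=
  ∀ n, 1 ≤ n → (PnSet n μ).ncard = (PnSet n ν).ncard

/-- The multiplicity of `v` among the parts `μ 1, μ 2, …` of `μ`. -/
noncomputable def partCount (μ : ℕ → ℕ) (v : ℕ) : ℕ := Set.ncard {i | 1 ≤ i ∧ μ i = v}

/-- `γ` is the extension of `ν` by the pair `(α, β)`: `γ` is a partition whose multiset of
nonzero parts is the multiset union of the nonzero parts of `ν + α` and those of `β`. -/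
def IsExtension (ν α β γ : ℕ → ℕ) : Prop :=
  IsPartition γ ∧
  ∀ v, 1 ≤ v → partCount γ v = partCount (fun i => ν i + α i) v + partCount β v

/-- `ν` is the `(i, j)`-transform of `μ`: the board of `ν` is obtained from the board of
`μ` by replacing the subboard of cells weakly southeast of `(i, j)` by its conjugate. -/
def IsTransform (i j : ℕ) (μ ν : ℕ → ℕ) : Prop :=
  IsPartition μ ∧ IsPartition ν ∧ 1 ≤ i ∧ 1 ≤ j ∧
  Board ν = (Board μ \ {p ∈ Board μ | i ≤ p.1 ∧ j ≤ p.2}) ∪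
    (fun p : ℕ × ℕ => (i + (p.2 - j), j + (p.1 - i))) '' {p ∈ Board μ | i ≤ p.1 ∧ j ≤ p.2}

/-- One step: `ν` is an `(i, 1)`-transform of `μ` for some `i`. -/
def TransformRel1 (μ ν : ℕ → ℕ) : Prop := ∃ i, IsTransform i 1 μ ν

/-- `(i, 1)`-equivalence: a finite (possibly empty) sequence of `(i, 1)`-transformations. -/
def TransformEquiv1 : (ℕ → ℕ) → (ℕ → ℕ) → Prop := Relation.ReflTransGen TransformRel1

/-- One step: `ν` is an `(i, j)`-transform of `μ` for some `i, j`. -/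
def TransformRel (μ ν : ℕ → ℕ) : Prop := ∃ i j, IsTransform i j μ ν

/-- Differing by a finite sequence of `(i, j)`-transformations. -/
def TransformEquiv : (ℕ → ℕ) → (ℕ → ℕ) → Prop := Relation.ReflTransGen TransformRel

/-- Row `i` of `μ` is salient if `i + μ i ≥ j + μ j` for some `j > i`. -/
def Salient (μ : ℕ → ℕ) (i : ℕ) : Prop := ∃ j, i < j ∧ j + μ j ≤ i + μ i

/-- The multiplicity of `v` in the multiset `S_μ = {i + μ i : row i of μ is salient}`. -/
noncomputable def salientCount (μ : ℕ → ℕ) (v : ℕ) : ℕ :=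
  Set.ncard {i | 1 ≤ i ∧ Salient μ i ∧ i + μ i = v}

/-- The staircase rank of `μ`: the largest `k` with `μ i ≥ k - i + 1` for `1 ≤ i ≤ k`. -/
noncomputable def staircaseRank (μ : ℕ → ℕ) : ℕ :=
  sSup {k | ∀ i, 1 ≤ i → i ≤ k → k + 1 ≤ μ i + i}

/-- The number of cells of the L in `μ` with corner `p = (i, j)`: the cells `(i, x)` of `μ`
with `x ≥ j` together with the cells `(y, j)` with `1 ≤ y ≤ i`. -/
def LWeight (μ : ℕ → ℕ) (p : ℕ × ℕ) : ℕ := (μ p.1 - p.2) + p.1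

/-- `c` lists the corners of a nested sequence of `k` L's in `μ`: each corner is a cell of
`μ`, and later corners are strictly above and strictly to the right of earlier ones. -/
def IsNested (μ : ℕ → ℕ) {k : ℕ} (c : Fin k → ℕ × ℕ) : Prop :=
  (∀ a, Cell μ (c a).1 (c a).2) ∧
  ∀ a b : Fin k, a < b → (c b).1 < (c a).1 ∧ (c a).2 < (c b).2

/-- `w_k(μ)`: the maximum weight of a sequence of `k` nested L's in `μ`
(`0` if there is no such sequence). -/
noncomputable def nestedLMax (μ : ℕ → ℕ) (k : ℕ) : ℕ :=
  sSup {w | ∃ c : Fin k → ℕ × ℕ, IsNested μ c ∧ ∑ a, LWeight μ (c a) = w}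

namespace ExtAux

lemma part_anti {μ : ℕ → ℕ} (h : IsPartition μ) {i j : ℕ} (hi : 1 ≤ i) (hij : i ≤ j) :
    μ j ≤ μ i := by
  induction j, hij using Nat.le_induction with
  | base => exact le_rfl
  | succ j hij ih => exact le_trans (h.2.1 j (le_trans hi hij)) ih

lemma isPartition_add {ν α : ℕ → ℕ} (hν : IsPartition ν) (hα : IsPartition α) :
    IsPartition (fun i => ν i + α i) := by
  refine ⟨by simp [hν.1, hα.1], fun i hi => Nat.add_le_add (hν.2.1 i hi) (hα.2.1 i hi), ?_⟩
  refine (hν.2.2.union hα.2.2).subset ?_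
  intro i hi
  simp only [Set.mem_setOf_eq, Set.mem_union] at hi ⊢
  omega

noncomputable def cntGe (f : ℕ → ℕ) (v : ℕ) : ℕ := Set.ncard {i | 1 ≤ i ∧ v ≤ f i}

lemma setGe_finite {f : ℕ → ℕ} (h : IsPartition f) {v : ℕ} (hv : 1 ≤ v) :
    {i | 1 ≤ i ∧ v ≤ f i}.Finite := by
  refine h.2.2.subset ?_
  intro i hi
  simp only [Set.mem_setOf_eq] at hi ⊢
  omega

lemma cntGe_ge_iff {f : ℕ → ℕ} (h : IsPartition f) {v i : ℕ} (hv : 1 ≤ v) (hi : 1 ≤ i) :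
    v ≤ f i ↔ i ≤ cntGe f v := by
  constructor
  · intro hfi
    have hsub : (↑(Finset.Icc 1 i) : Set ℕ) ⊆ {j | 1 ≤ j ∧ v ≤ f j} := by
      intro j hj
      simp only [Finset.coe_Icc, Set.mem_Icc] at hj
      exact ⟨hj.1, le_trans hfi (part_anti h hj.1 hj.2)⟩
    have := Set.ncard_le_ncard hsub (setGe_finite h hv)
    rwa [Set.ncard_coe_finset, Nat.card_Icc, Nat.add_sub_cancel] at this
  · intro hcnt
    by_contra hfi
    push_neg at hfi
    have hsub : {j | 1 ≤ j ∧ v ≤ f j} ⊆ (↑(Finset.Icc 1 (i - 1)) : Set ℕ) := by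
      intro j hj
      simp only [Set.mem_setOf_eq] at hj
      simp only [Finset.coe_Icc, Set.mem_Icc]
      refine ⟨hj.1, ?_⟩
      by_contra hji
      push_neg at hji
      have : f j ≤ f i := part_anti h hi (by omega)
      omega
    have := Set.ncard_le_ncard hsub (Finset.finite_toSet _)
    rw [Set.ncard_coe_finset, Nat.card_Icc] at this
    unfold cntGe at hcnt
    omega

lemma cntGe_succ {f : ℕ → ℕ} (h : IsPartition f) {v : ℕ} (hv : 1 ≤ v) :
    cntGe f v = partCount f v + cntGe f (v + 1) := by
  have hset : {i | 1 ≤ i ∧ v ≤ f i} = {i | 1 ≤ i ∧ f i = v} ∪ {i | 1 ≤ i ∧ v + 1 ≤ f i} := by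
    ext i; simp only [Set.mem_setOf_eq, Set.mem_union]; omega
  have hdisj : Disjoint {i | 1 ≤ i ∧ f i = v} {i | 1 ≤ i ∧ v + 1 ≤ f i} := by
    rw [Set.disjoint_left]
    intro i hi1 hi2
    simp only [Set.mem_setOf_eq] at hi1 hi2
    omega
  have h1 : {i | 1 ≤ i ∧ f i = v}.Finite :=
    (setGe_finite h hv).subset (by intro i hi; simp only [Set.mem_setOf_eq] at hi ⊢; omega)
  have h2 : {i | 1 ≤ i ∧ v + 1 ≤ f i}.Finite := setGe_finite h (by omega)
  rw [cntGe, hset, Set.ncard_union_eq hdisj h1 h2]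
  rfl

lemma cntGe_zero_of_big {f : ℕ → ℕ} (h : IsPartition f) {v : ℕ} (hv : f 1 < v) :
    cntGe f v = 0 := by
  have : {i | 1 ≤ i ∧ v ≤ f i} = ∅ := by
    ext i
    simp only [Set.mem_setOf_eq, Set.mem_empty_iff_false, iff_false, not_and]
    intro hi
    have := part_anti h (le_refl 1) hi
    omega
  rw [cntGe, this, Set.ncard_empty]

lemma cnt_transfer {f g f' g' : ℕ → ℕ} (hf : IsPartition f) (hg : IsPartition g)
    (hf' : IsPartition f') (hg' : IsPartition g')
    (hpc : ∀ v, 1 ≤ v → partCount f v + partCount g v = partCount f' v + partCount g' v) :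
    ∀ v, 1 ≤ v → cntGe f v + cntGe g v = cntGe f' v + cntGe g' v := by
  set N := max (max (f 1) (g 1)) (max (f' 1) (g' 1)) with hN
  have key : ∀ d v, 1 ≤ v → N + 1 ≤ v + d →
      cntGe f v + cntGe g v = cntGe f' v + cntGe g' v := by
    intro d
    induction d with
    | zero =>
      intro v hv hNv
      rw [cntGe_zero_of_big hf (by omega), cntGe_zero_of_big hg (by omega),
        cntGe_zero_of_big hf' (by omega), cntGe_zero_of_big hg' (by omega)]
    | succ d ih =>
      intro v hv hNv
      by_cases hbig : N + 1 ≤ v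
      · rw [cntGe_zero_of_big hf (by omega), cntGe_zero_of_big hg (by omega),
          cntGe_zero_of_big hf' (by omega), cntGe_zero_of_big hg' (by omega)]
      · have h1 := cntGe_succ hf hv
        have h2 := cntGe_succ hg hv
        have h3 := cntGe_succ hf' hv
        have h4 := cntGe_succ hg' hv
        have h5 := hpc v hv
        have h6 := ih (v + 1) (by omega) (by omega)
        omega
  intro v hv
  exact key (N + 1) v hv (by omega)

lemma zero_isPartition : IsPartition (fun _ => 0) :=
  ⟨rfl, fun _ _ => le_rfl, by simp⟩

lemma partCount_zero {v : ℕ} (hv : 1 ≤ v) : partCount (fun _ => 0) v = 0 := by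
  have : {i | 1 ≤ i ∧ (fun _ : ℕ => 0) i = v} = ∅ := by
    ext i; simp only [Set.mem_setOf_eq, Set.mem_empty_iff_false, iff_false]; omega
  rw [partCount, this, Set.ncard_empty]

lemma cntGe_zero_fun {v : ℕ} (hv : 1 ≤ v) : cntGe (fun _ => 0) v = 0 :=
  cntGe_zero_of_big zero_isPartition (by omega)

lemma partition_ext {f g : ℕ → ℕ} (hf : IsPartition f) (hg : IsPartition g)
    (h : ∀ v, 1 ≤ v → partCount f v = partCount g v) : f = g := by
  have hcnt : ∀ v, 1 ≤ v → cntGe f v = cntGe g v := by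
    intro v hv
    have := cnt_transfer hf zero_isPartition hg zero_isPartition
      (fun v hv => by rw [partCount_zero hv, h v hv]) v hv
    rw [cntGe_zero_fun hv] at this
    omega
  funext i
  rcases Nat.eq_zero_or_pos i with hi | hi
  · subst hi; rw [hf.1, hg.1]
  · refine le_antisymm ?_ ?_
    · rcases Nat.eq_zero_or_pos (f i) with h0 | h0
      · omega
      · have := (cntGe_ge_iff hf h0 hi).mp le_rfl
        rw [hcnt _ h0] at this
        exact (cntGe_ge_iff hg h0 hi).mpr this
    · rcases Nat.eq_zero_or_pos (g i) with h0 | h0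
      · omega
      · have := (cntGe_ge_iff hg h0 hi).mp le_rfl
        rw [← hcnt _ h0] at this
        exact (cntGe_ge_iff hf h0 hi).mpr this

lemma sum_le_pweight {f : ℕ → ℕ} (hf : IsPartition f) (s : Finset ℕ) :
    ∑ i ∈ s, f i ≤ pweight f := by
  have hfin : (Function.support f).Finite := hf.2.2
  rw [pweight, finsum_eq_sum f hfin]
  have h1 : ∑ i ∈ s ∩ hfin.toFinset, f i = ∑ i ∈ s, f i := by
    refine Finset.sum_subset (Finset.inter_subset_left) ?_
    intro i hi hni
    by_contra hne
    exact hni (Finset.mem_inter.mpr ⟨hi, hfin.mem_toFinset.mpr hne⟩)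
  rw [← h1]
  exact Finset.sum_le_sum_of_subset (Finset.inter_subset_right)

lemma strict_gap {ν : ℕ → ℕ} (hν : IsPartition ν) (hs : IsStrict ν) {r : ℕ} (hνr : ν r ≠ 0) :
    ∀ d i, 1 ≤ i → i + d = r → ν r + d ≤ ν i := by
  intro d
  induction d with
  | zero =>
    intro i _ hir
    have h : i = r := by omega
    subst h
    omega
  | succ d ih =>
    intro i hi hir
    have h1 : ν r + d ≤ ν (i + 1) := ih (i + 1) (by omega) (by omega)
    have h2 : ν (i + 1) < ν i := hs i (i + 1) hi (by omega) (by omega)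
    omega

lemma pc_split {f : ℕ → ℕ} (hf : IsPartition f) (r : ℕ) {v : ℕ} (hv : 1 ≤ v) :
    partCount f v = Set.ncard {i | 1 ≤ i ∧ i ≤ r ∧ f i = v} +
      Set.ncard {i | r < i ∧ f i = v} := by
  have hset : {i | 1 ≤ i ∧ f i = v} =
      {i | 1 ≤ i ∧ i ≤ r ∧ f i = v} ∪ {i | r < i ∧ f i = v} := by
    ext i; simp only [Set.mem_setOf_eq, Set.mem_union]; omega
  have hdisj : Disjoint {i | 1 ≤ i ∧ i ≤ r ∧ f i = v} {i | r < i ∧ f i = v} := by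
    rw [Set.disjoint_left]
    intro i h1 h2
    simp only [Set.mem_setOf_eq] at h1 h2
    omega
  have hbig : {i | 1 ≤ i ∧ f i = v}.Finite :=
    hf.2.2.subset (by intro i hi; simp only [Set.mem_setOf_eq] at hi ⊢; omega)
  have h1 : {i | 1 ≤ i ∧ i ≤ r ∧ f i = v}.Finite :=
    hbig.subset (by intro i hi; simp only [Set.mem_setOf_eq] at hi ⊢; omega)
  have h2 : {i | r < i ∧ f i = v}.Finite :=
    hbig.subset (by intro i hi; simp only [Set.mem_setOf_eq] at hi ⊢; omega)
  rw [partCount, hset, Set.ncard_union_eq hdisj h1 h2]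

lemma core {ν α β α' β' : ℕ → ℕ} {r : ℕ}
    (hν : IsPartition ν) (hνs : IsStrict ν)
    (hα : IsPartition α) (hβ : IsPartition β) (hα' : IsPartition α')
    (hνr : ν r ≠ 0)
    (hw : pweight α + pweight β ≤ ν r + (r - 1))
    (hcnt : ∀ v, 1 ≤ v → cntGe (fun i => ν i + α i) v + cntGe β v
        = cntGe (fun i => ν i + α' i) v + cntGe β' v)
    {i₀ : ℕ} (hi₀1 : 1 ≤ i₀) (hi₀r : i₀ ≤ r)
    (hprev : ∀ i, 1 ≤ i → i < i₀ → α i = α' i)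
    (hlti : α i₀ < α' i₀) : False := by
  have hνα := isPartition_add hν hα
  have hνα' := isPartition_add hν hα'
  set a := α' i₀ with ha
  set V := ν i₀ + a with hV
  have hνi₀ : ν r + (r - i₀) ≤ ν i₀ := strict_gap hν hνs hνr (r - i₀) i₀ hi₀1 (by omega)
  have hV1 : 1 ≤ V := by omega
  -- i₀ ≤ cntGe (ν+α') V
  have h1 : i₀ ≤ cntGe (fun i => ν i + α' i) V :=
    (cntGe_ge_iff hνα' hV1 hi₀1).mp le_rfl
  -- cntGe (ν+α) V < i₀
  have h2 : cntGe (fun i => ν i + α i) V < i₀ := by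
    by_contra hcon
    push_neg at hcon
    have := (cntGe_ge_iff hνα hV1 hi₀1).mpr hcon
    omega
  -- hence β has a part ≥ V
  have h3 : 1 ≤ cntGe β V := by
    have := hcnt V hV1
    omega
  have h4 : V ≤ β 1 := (cntGe_ge_iff hβ hV1 le_rfl).mpr h3
  have h5 : β 1 ≤ pweight β := by
    have := sum_le_pweight hβ {1}
    simpa using this
  -- pweight α ≥ i₀ - 1
  have h6 : i₀ - 1 ≤ pweight α := by
    have hsum : ∑ i ∈ Finset.Icc 1 (i₀ - 1), α i ≤ pweight α := sum_le_pweight hα _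
    have heach : ∀ i ∈ Finset.Icc 1 (i₀ - 1), 1 ≤ α i := by
      intro i hi
      rw [Finset.mem_Icc] at hi
      have hai : α i = α' i := hprev i hi.1 (by omega)
      have : α' i₀ ≤ α' i := part_anti hα' hi.1 (by omega)
      omega
    have := Finset.card_nsmul_le_sum (Finset.Icc 1 (i₀ - 1)) (fun i => α i) 1 heach
    rw [Nat.card_Icc] at this
    simp only [smul_eq_mul, mul_one] at this
    omega
  omega

lemma alpha_eq {ν α β α' β' : ℕ → ℕ} {r : ℕ}
    (hν : IsPartition ν) (hνs : IsStrict ν)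
    (hα : IsPartition α) (hβ : IsPartition β) (hα' : IsPartition α') (hβ' : IsPartition β')
    (hνr : ν r ≠ 0)
    (hw : pweight α + pweight β ≤ ν r + (r - 1))
    (hw' : pweight α' + pweight β' ≤ ν r + (r - 1))
    (hcnt : ∀ v, 1 ≤ v → cntGe (fun i => ν i + α i) v + cntGe β v
        = cntGe (fun i => ν i + α' i) v + cntGe β' v) :
    ∀ i, 1 ≤ i → i ≤ r → α i = α' i := by
  intro i
  induction i using Nat.strong_induction_on with
  | _ i ih =>
    intro hi1 hir
    by_contra hne
    rcases Nat.lt_or_ge (α i) (α' i) with hlt | hge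
    · exact core hν hνs hα hβ hα' hνr hw hcnt hi1 hir
        (fun j hj1 hji => ih j hji hj1 (by omega)) hlt
    · have hgt : α' i < α i := by omega
      exact core hν hνs hα' hβ' hα hνr hw' (fun v hv => (hcnt v hv).symm) hi1 hir
        (fun j hj1 hji => (ih j hji hj1 (by omega)).symm) hgt

end ExtAux

theorem extensions_of_mu_coincide (n r m : ℕ) (μ ν : ℕ → ℕ)
    (hμ : IsPartition μ) (hν : IsPartition ν)
    (hμs : IsStrict μ) (hνs : IsStrict ν)
    (hμn : pweight μ = n) (hνn : pweight ν = n) (hne : μ ≠ ν)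
    (hr : μ r ≠ ν r) (hrmax : ∀ j, r < j → μ j = ν j)
    (hlt : μ r < ν r) (hm : m = r + ν r)
    (k : ℕ) (α β α' β' γ : ℕ → ℕ)
    (hα : IsPartition α) (hβ : IsPartition β)
    (hα' : IsPartition α') (hβ' : IsPartition β')
    (hk : α 1 = k) (hk' : α' 1 = k)
    (hw : pweight α + pweight β = ν r + (r - 1))
    (hw' : pweight α' + pweight β' = ν r + (r - 1))
    (h : IsExtension ν α β γ) (h' : IsExtension ν α' β' γ) :
    ∀ δ δ' : ℕ → ℕ, IsExtension μ α β δ → IsExtension μ α' β' δ' → δ = δ' := by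
  intro δ δ' hδ hδ'
  have hνr : ν r ≠ 0 := by omega
  have hpcν : ∀ v, 1 ≤ v → partCount (fun i => ν i + α i) v + partCount β v
      = partCount (fun i => ν i + α' i) v + partCount β' v :=
    fun v hv => (h.2 v hv).symm.trans (h'.2 v hv)
  have hcnt := ExtAux.cnt_transfer (ExtAux.isPartition_add hν hα) hβ
    (ExtAux.isPartition_add hν hα') hβ' hpcν
  have hαeq : ∀ i, 1 ≤ i → i ≤ r → α i = α' i :=
    ExtAux.alpha_eq hν hνs hα hβ hα' hβ' hνr hw.le hw'.le hcnt
  have hpcμ : ∀ v, 1 ≤ v → partCount (fun i => μ i + α i) v + partCount β v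
      = partCount (fun i => μ i + α' i) v + partCount β' v := by
    intro v hv
    have s1 : partCount (fun i => μ i + α i) v =
        Set.ncard {i | 1 ≤ i ∧ i ≤ r ∧ μ i + α i = v} +
        Set.ncard {i | r < i ∧ μ i + α i = v} :=
      ExtAux.pc_split (ExtAux.isPartition_add hμ hα) r hv
    have s2 : partCount (fun i => μ i + α' i) v =
        Set.ncard {i | 1 ≤ i ∧ i ≤ r ∧ μ i + α' i = v} +
        Set.ncard {i | r < i ∧ μ i + α' i = v} :=
      ExtAux.pc_split (ExtAux.isPartition_add hμ hα') r hv
    have s3 : partCount (fun i => ν i + α i) v =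
        Set.ncard {i | 1 ≤ i ∧ i ≤ r ∧ ν i + α i = v} +
        Set.ncard {i | r < i ∧ ν i + α i = v} :=
      ExtAux.pc_split (ExtAux.isPartition_add hν hα) r hv
    have s4 : partCount (fun i => ν i + α' i) v =
        Set.ncard {i | 1 ≤ i ∧ i ≤ r ∧ ν i + α' i = v} +
        Set.ncard {i | r < i ∧ ν i + α' i = v} :=
      ExtAux.pc_split (ExtAux.isPartition_add hν hα') r hv
    have nA : Set.ncard {i | 1 ≤ i ∧ i ≤ r ∧ μ i + α i = v}
        = Set.ncard {i | 1 ≤ i ∧ i ≤ r ∧ μ i + α' i = v} := by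
      congr 1
      ext i
      simp only [Set.mem_setOf_eq]
      exact ⟨fun ⟨h1, h2, h3⟩ => ⟨h1, h2, by rw [← hαeq i h1 h2]; exact h3⟩,
        fun ⟨h1, h2, h3⟩ => ⟨h1, h2, by rw [hαeq i h1 h2]; exact h3⟩⟩
    have nAν : Set.ncard {i | 1 ≤ i ∧ i ≤ r ∧ ν i + α i = v}
        = Set.ncard {i | 1 ≤ i ∧ i ≤ r ∧ ν i + α' i = v} := by
      congr 1
      ext i
      simp only [Set.mem_setOf_eq]
      exact ⟨fun ⟨h1, h2, h3⟩ => ⟨h1, h2, by rw [← hαeq i h1 h2]; exact h3⟩,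
        fun ⟨h1, h2, h3⟩ => ⟨h1, h2, by rw [hαeq i h1 h2]; exact h3⟩⟩
    have nB : Set.ncard {i | r < i ∧ μ i + α i = v}
        = Set.ncard {i | r < i ∧ ν i + α i = v} := by
      congr 1
      ext i
      simp only [Set.mem_setOf_eq]
      exact ⟨fun ⟨h1, h2⟩ => ⟨h1, by rw [← hrmax i h1]; exact h2⟩,
        fun ⟨h1, h2⟩ => ⟨h1, by rw [hrmax i h1]; exact h2⟩⟩
    have nB' : Set.ncard {i | r < i ∧ μ i + α' i = v}
        = Set.ncard {i | r < i ∧ ν i + α' i = v} := by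
      congr 1
      ext i
      simp only [Set.mem_setOf_eq]
      exact ⟨fun ⟨h1, h2⟩ => ⟨h1, by rw [← hrmax i h1]; exact h2⟩,
        fun ⟨h1, h2⟩ => ⟨h1, by rw [hrmax i h1]; exact h2⟩⟩
    have heq := hpcν v hv
    omega
  exact ExtAux.partition_ext hδ.1 hδ'.1
    (fun v hv => (hδ.2 v hv).trans ((hpcμ v hv).trans (hδ'.2 v hv).symm))
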